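/- Let α_i, β_i ∈ ℝ³ be linearly independent, let k_α, k_β, l_α, l_β > 0 and c_ω ≥ 0. Then the origin of the error system is uniformly globally attractive: for every r > 0 and ε > 0 there exists T > 0 (independent of t₀) such that for every t₀ ∈ ℝ, every continuous Ω : ℝ → ℝ³ with ‖Ω(t)‖ ≤ c_ω for all t, and every solution E of the error system on [t₀, ∞) with ‖E(t₀)‖ ≤ r, one has ‖E(t)‖ ≤ ε for all t ≥ t₀ + T. -/

import Mathlib

open scoped RealInnerProductSpace
open Matrix Filter

noncomputable section

/-- ℝ³ with the Euclidean norm and inner product. -/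
abbrev V3 : Type := EuclideanSpace ℝ (Fin 3)

/-- Identity identification of `V3` with plain functions `Fin 3 → ℝ`. -/
def toF (v : V3) : Fin 3 → ℝ := v

/-- Identity identification of plain functions `Fin 3 → ℝ` with `V3`. -/
def toE (v : Fin 3 → ℝ) : V3 := WithLp.toLp 2 v

/-- The cross product on ℝ³. -/
def cross (v w : V3) : V3 := toE (crossProduct (toF v) (toF w))

/-- `(Eα, Eβ, Eb)` is a solution on `[t₀, ∞)` of the error system
`Ėα = Eb × (αi + Eα) − kα Eα`, `Ėβ = Eb × (βi + Eβ) − kβ Eβ`,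
`Ėb = Ω × Eb + lα Eα × αi + lβ Eβ × βi`. -/
def IsSolution (αi βi : V3) (kα kβ lα lβ : ℝ) (Ω : ℝ → V3) (t₀ : ℝ)
    (Eα Eβ Eb : ℝ → V3) : Prop :=
  ∀ t ∈ Set.Ici t₀,
    HasDerivWithinAt Eα (cross (Eb t) (αi + Eα t) - kα • Eα t) (Set.Ici t₀) t ∧
    HasDerivWithinAt Eβ (cross (Eb t) (βi + Eβ t) - kβ • Eβ t) (Set.Ici t₀) t ∧
    HasDerivWithinAt Eb
      (cross (Ω t) (Eb t) + lα • cross (Eα t) αi + lβ • cross (Eβ t) βi) (Set.Ici t₀) t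

/-- The Euclidean norm of a state `(Eα, Eβ, Eb) ∈ ℝ³ × ℝ³ × ℝ³`. -/
def stateNorm (Eα Eβ Eb : V3) : ℝ := Real.sqrt (‖Eα‖ ^ 2 + ‖Eβ‖ ^ 2 + ‖Eb‖ ^ 2)

lemma inner_eq (x y : V3) : ⟪x, y⟫ = x 0 * y 0 + x 1 * y 1 + x 2 * y 2 := by
  simp [PiLp.inner_apply, Fin.sum_univ_three, mul_comm]
lemma cross_apply' (v w : V3) : cross v w = toE ![v 1 * w 2 - v 2 * w 1, v 2 * w 0 - v 0 * w 2, v 0 * w 1 - v 1 * w 0] := by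
  simp [cross, toE, toF, cross_apply]
lemma cross0 (v w : V3) : (cross v w) 0 = v 1 * w 2 - v 2 * w 1 := by rw [cross_apply']; rfl
lemma cross1 (v w : V3) : (cross v w) 1 = v 2 * w 0 - v 0 * w 2 := by rw [cross_apply']; rfl
lemma cross2 (v w : V3) : (cross v w) 2 = v 0 * w 1 - v 1 * w 0 := by rw [cross_apply']; rfl
lemma norm_sq_eq (x : V3) : ‖x‖ ^ 2 = ⟪x, x⟫ := by
  rw [← real_inner_self_eq_norm_sq]
lemma inner_cross_self (u v : V3) : ⟪u, cross v u⟫ = 0 := by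
  simp only [inner_eq, cross0, cross1, cross2]; ring
lemma inner_cross_self' (u v : V3) : ⟪u, cross u v⟫ = 0 := by
  simp only [inner_eq, cross0, cross1, cross2]; ring
lemma inner_cross_swap (u v w : V3) : ⟪u, cross v w⟫ + ⟪v, cross u w⟫ = 0 := by
  simp only [inner_eq, cross0, cross1, cross2]; ring
lemma lagrange (v w : V3) : ‖cross v w‖ ^ 2 = ‖v‖ ^ 2 * ‖w‖ ^ 2 - ⟪v, w⟫ ^ 2 := by
  simp only [norm_sq_eq, inner_eq, cross0, cross1, cross2]; ring
lemma norm_cross_le (v w : V3) : ‖cross v w‖ ≤ ‖v‖ * ‖w‖ := by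
  have h := lagrange v w
  nlinarith [norm_nonneg (cross v w), norm_nonneg v, norm_nonneg w, sq_nonneg (⟪v, w⟫),
    mul_nonneg (norm_nonneg v) (norm_nonneg w)]
lemma cross_add_left (x y w : V3) : cross (x + y) w = cross x w + cross y w := by
  ext i; fin_cases i <;> simp [cross0, cross1, cross2] <;> ring
lemma cross_smul_left (s : ℝ) (x w : V3) : cross (s • x) w = s • cross x w := by
  ext i; fin_cases i <;> simp [cross0, cross1, cross2] <;> ring
lemma cross_add_right (v x y : V3) : cross v (x + y) = cross v x + cross v y :=
  by ext i; fin_cases i <;> simp [cross0, cross1, cross2] <;> ring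
def crossL (w : V3) : V3 →L[ℝ] V3 :=
  LinearMap.toContinuousLinearMap
    { toFun := fun v => cross v w
      map_add' := fun x y => cross_add_left x y w
      map_smul' := fun s x => cross_smul_left s x w }
@[simp] lemma crossL_apply (w v : V3) : crossL w v = cross v w := rfl


lemma cross_eq_zero_cases (u w : V3) (h : cross u w = 0) :
    w = 0 ∨ ∃ a : ℝ, a • w = u := by
  have h' : crossProduct (toF u) (toF w) = 0 := by
    simpa [cross, toE] using congrArg WithLp.ofLp h
  have hdep : ¬ LinearIndependent ℝ ![toF u, toF w] := by
    rw [← crossProduct_ne_zero_iff_linearIndependent]; simpa using h'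
  rw [linearIndependent_fin2] at hdep
  push_neg at hdep
  rcases eq_or_ne (toF w) 0 with hw | hw
  · left; exact WithLp.ofLp_injective 2 hw
  · right
    obtain ⟨a, ha⟩ := hdep hw
    exact ⟨a, WithLp.ofLp_injective 2 ha⟩

lemma exists_lambda (αi βi : V3) (hind : LinearIndependent ℝ ![αi, βi]) :
    ∃ lam > (0:ℝ), ∀ c : V3, lam * ‖c‖ ^ 2 ≤ ‖cross c αi‖ ^ 2 + ‖cross c βi‖ ^ 2 := by
  have hα0 : αi ≠ 0 := hind.ne_zero 0
  have hβ0 : βi ≠ 0 := hind.ne_zero 1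
  have hpair := linearIndependent_fin2.mp hind
  set f : V3 → ℝ := fun c => ‖cross c αi‖ ^ 2 + ‖cross c βi‖ ^ 2 with hf
  have hcont : Continuous f := by
    have h1 : Continuous fun c : V3 => cross c αi := (crossL αi).continuous
    have h2 : Continuous fun c : V3 => cross c βi := (crossL βi).continuous
    exact ((h1.norm.pow 2).add (h2.norm.pow 2))
  have hsne : (Metric.sphere (0:V3) 1).Nonempty := by
    exact NormedSpace.sphere_nonempty.mpr (by norm_num)
  obtain ⟨u, hu, hmin⟩ := (isCompact_sphere (0:V3) 1).exists_isMinOn hsne hcont.continuousOn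
  have hu1 : ‖u‖ = 1 := by simpa using hu
  have hupos : f u > 0 := by
    rcases lt_or_eq_of_le (by positivity : (0:ℝ) ≤ f u) with h | h
    · exact h
    exfalso
    have hsum : ‖cross u αi‖ ^ 2 + ‖cross u βi‖ ^ 2 = 0 := h.symm
    have hca : cross u αi = 0 := by
      have h1 : ‖cross u αi‖ ^ 2 = 0 := by nlinarith [hsum, sq_nonneg ‖cross u αi‖, sq_nonneg ‖cross u βi‖]
      simpa using (pow_eq_zero_iff (by norm_num)).mp h1
    have hcb : cross u βi = 0 := by
      have h1 : ‖cross u βi‖ ^ 2 = 0 := by nlinarith [hsum, sq_nonneg ‖cross u αi‖, sq_nonneg ‖cross u βi‖]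
      simpa using (pow_eq_zero_iff (by norm_num)).mp h1
    have hune : u ≠ 0 := by intro h0; rw [h0] at hu1; simp at hu1
    rcases cross_eq_zero_cases u αi hca with h | ⟨a, ha⟩
    · exact hα0 h
    rcases cross_eq_zero_cases u βi hcb with h | ⟨b, hb⟩
    · exact hβ0 h
    have hbne : b ≠ 0 := by
      intro h0; rw [h0, zero_smul] at hb; exact hune hb.symm
    have hane : a ≠ 0 := by
      intro h0; rw [h0, zero_smul] at ha; exact hune ha.symm
    apply hpair.2 (b / a)
    have : (b / a) • βi = (1 / a) • (b • βi) := by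
      rw [smul_smul]; ring_nf
    rw [show ((![αi, βi] : Fin 2 → V3) 1) = βi from rfl, show ((![αi, βi] : Fin 2 → V3) 0) = αi from rfl]
    rw [this, hb, ← ha, smul_smul]
    rw [show (1 / a) * a = 1 by field_simp, one_smul]
  refine ⟨f u, hupos, fun c => ?_⟩
  rcases eq_or_ne c 0 with rfl | hc
  · simp [hf, cross, toF, toE]
  · have hnc : ‖c‖ ≠ 0 := norm_ne_zero_iff.mpr hc
    set v : V3 := ‖c‖⁻¹ • c with hv
    have hvs : v ∈ Metric.sphere (0:V3) 1 := by
      simp [hv, norm_smul, abs_of_nonneg (inv_nonneg.mpr (norm_nonneg c)), inv_mul_cancel₀ hnc]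
    have hle : f u ≤ f v := hmin hvs
    have hfv : f v = (‖c‖⁻¹) ^ 2 * f c := by
      simp only [hf, hv, cross_smul_left, norm_smul, Real.norm_eq_abs,
        abs_of_nonneg (inv_nonneg.mpr (norm_nonneg c))]
      ring
    rw [hfv] at hle
    have h2 : (0:ℝ) < ‖c‖ ^ 2 := by positivity
    calc f u * ‖c‖ ^ 2 ≤ ((‖c‖⁻¹) ^ 2 * f c) * ‖c‖ ^ 2 := by nlinarith
    _ = f c := by field_simp


lemma inner_ge_neg (u v : V3) (c : ℝ) (h : ‖u‖ * ‖v‖ ≤ c) : -c ≤ ⟪u, v⟫ := by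
  have h1 := abs_real_inner_le_norm u v
  have h2 := neg_abs_le ⟪u, v⟫
  linarith

lemma inner_le_of (u v : V3) (c : ℝ) (h : ‖u‖ * ‖v‖ ≤ c) : ⟪u, v⟫ ≤ c := by
  have h1 := abs_real_inner_le_norm u v
  have h2 := le_abs_self ⟪u, v⟫
  linarith

set_option maxHeartbeats 1000000 in
/-- Pure real-arithmetic core of the cross-term derivative bound. -/
lemma key_arith (A B na nb nc R kα kβ lα lβ cω lam X2 Y2 i1 i2 i3 i4 i5 i6 : ℝ)
    (hA0 : 0 ≤ A) (hB0 : 0 ≤ B) (hna0 : 0 ≤ na) (hnb0 : 0 ≤ nb) (hnc0 : 0 ≤ nc)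
    (hkα : 0 < kα) (hkβ : 0 < kβ) (hlα : 0 < lα) (hlβ : 0 < lβ) (hcω : 0 ≤ cω)
    (hR : 0 ≤ R) (hx : na ≤ R) (hy : nb ≤ R) (hz : nc ≤ R)
    (hlam : 0 < lam) (hlamb : lam * nc ^ 2 ≤ X2 + Y2)
    (hb1 : -(R * A * (na * nc)) ≤ i1)
    (hb2 : -(R * B * (nb * nc)) ≤ i2)
    (hb3 : i3 ≤ A * (na * nc)) (hb3' : -(A * (na * nc)) ≤ i3)
    (hb4 : i4 ≤ B * (nb * nc)) (hb4' : -(B * (nb * nc)) ≤ i4)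
    (hb5 : -(A * cω * (na * nc) + lα * A ^ 2 * na ^ 2 + A * lβ * B * (na * nb)) ≤ i5)
    (hb6 : -(B * cω * (nb * nc) + B * lα * A * (na * nb) + lβ * B ^ 2 * nb ^ 2) ≤ i6) :
    lam / 2 * nc ^ 2
      - (((A + B) * (R + kα + kβ + cω)) ^ 2 / lam + (A + B) * (lα * A + lβ * B))
        * (na ^ 2 + nb ^ 2)
    ≤ X2 + i1 - kα * i3 + i5 + (Y2 + i2 - kβ * i4 + i6) := by
  have hki3 : -(kα * (A * (na * nc))) ≤ -(kα * i3) := by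
    have := mul_le_mul_of_nonneg_left hb3 hkα.le
    linarith
  have hki4 : -(kβ * (B * (nb * nc))) ≤ -(kβ * i4) := by
    have := mul_le_mul_of_nonneg_left hb4 hkβ.le
    linarith
  -- coupling bound
  have hcoup : (R * A + kα * A + A * cω) * (na * nc) + (R * B + kβ * B + B * cω) * (nb * nc)
      ≤ ((A + B) * (R + kα + kβ + cω)) * ((na + nb) * nc) := by
    have h1 : R * A + kα * A + A * cω ≤ (A + B) * (R + kα + kβ + cω) := by nlinarith
    have h2 : R * B + kβ * B + B * cω ≤ (A + B) * (R + kα + kβ + cω) := by nlinarith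
    have h3 := mul_le_mul_of_nonneg_right h1 (mul_nonneg hna0 hnc0)
    have h4 := mul_le_mul_of_nonneg_right h2 (mul_nonneg hnb0 hnc0)
    nlinarith [h3, h4]
  -- Young's inequality
  have hyoung : ((A + B) * (R + kα + kβ + cω)) * ((na + nb) * nc)
      ≤ lam / 2 * nc ^ 2 + ((A + B) * (R + kα + kβ + cω)) ^ 2 / lam * (na ^ 2 + nb ^ 2) := by
    set P : ℝ := (A + B) * (R + kα + kβ + cω) with hPd
    rw [← sub_nonneg]
    have e : lam / 2 * nc ^ 2 + P ^ 2 / lam * (na ^ 2 + nb ^ 2) - P * ((na + nb) * nc)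
        = (lam * (lam * nc ^ 2) + 2 * (P ^ 2 * (na ^ 2 + nb ^ 2))
            - 2 * lam * (P * ((na + nb) * nc))) / (2 * lam) := by
      field_simp
    rw [e]
    apply div_nonneg _ (by linarith)
    nlinarith [sq_nonneg (lam * nc - P * (na + nb)),
      mul_nonneg (sq_nonneg P) (sq_nonneg (na - nb))]
  -- quadratic bound
  have hmulab : na * nb ≤ na ^ 2 + nb ^ 2 := by
    nlinarith [sq_nonneg (na - nb), mul_nonneg hna0 hnb0]
  have hquad : lα * A ^ 2 * na ^ 2 + A * lβ * B * (na * nb) + B * lα * A * (na * nb)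
      + lβ * B ^ 2 * nb ^ 2 ≤ ((A + B) * (lα * A + lβ * B)) * (na ^ 2 + nb ^ 2) := by
    have c1 : (0:ℝ) ≤ A * lβ * B := mul_nonneg (mul_nonneg hA0 hlβ.le) hB0
    have c2 : (0:ℝ) ≤ B * lα * A := mul_nonneg (mul_nonneg hB0 hlα.le) hA0
    have q1 := mul_le_mul_of_nonneg_left hmulab c1
    have q2 := mul_le_mul_of_nonneg_left hmulab c2
    have q3 : lα * A ^ 2 * na ^ 2 ≤ lα * A ^ 2 * (na ^ 2 + nb ^ 2) := by
      have : (0:ℝ) ≤ lα * A ^ 2 := mul_nonneg hlα.le (sq_nonneg A)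
      nlinarith [sq_nonneg nb]
    have q4 : lβ * B ^ 2 * nb ^ 2 ≤ lβ * B ^ 2 * (na ^ 2 + nb ^ 2) := by
      have : (0:ℝ) ≤ lβ * B ^ 2 := mul_nonneg hlβ.le (sq_nonneg B)
      nlinarith [sq_nonneg na]
    linarith
  linarith [hb1, hb2, hki3, hki4, hb5, hb6, hcoup, hyoung, hquad, hlamb]

lemma key_bound (αi βi x y z ω : V3) (lam kα kβ lα lβ cω R : ℝ)
    (hlam : 0 < lam)
    (hlamb : lam * ‖z‖ ^ 2 ≤ ‖cross z αi‖ ^ 2 + ‖cross z βi‖ ^ 2)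
    (hkα : 0 < kα) (hkβ : 0 < kβ) (hlα : 0 < lα) (hlβ : 0 < lβ) (hcω : 0 ≤ cω)
    (hR : 0 ≤ R) (hx : ‖x‖ ≤ R) (hy : ‖y‖ ≤ R) (hz : ‖z‖ ≤ R) (hω : ‖ω‖ ≤ cω) :
    ⟪cross z (αi + x) - kα • x, cross z αi⟫
      + ⟪x, cross (cross ω z + lα • cross x αi + lβ • cross y βi) αi⟫
      + (⟪cross z (βi + y) - kβ • y, cross z βi⟫
      + ⟪y, cross (cross ω z + lα • cross x αi + lβ • cross y βi) βi⟫)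
    ≥ lam / 2 * ‖z‖ ^ 2
      - ((((‖αi‖ + ‖βi‖) * (R + kα + kβ + cω)) ^ 2 / lam
          + (‖αi‖ + ‖βi‖) * (lα * ‖αi‖ + lβ * ‖βi‖)) * (‖x‖ ^ 2 + ‖y‖ ^ 2)) := by
  obtain ⟨u, hu⟩ : ∃ u', cross ω z + lα • cross x αi + lβ • cross y βi = u' := ⟨_, rfl⟩
  rw [hu]
  have hA0 : 0 ≤ ‖αi‖ := norm_nonneg _
  have hB0 : 0 ≤ ‖βi‖ := norm_nonneg _
  have hna0 : 0 ≤ ‖x‖ := norm_nonneg _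
  have hnb0 : 0 ≤ ‖y‖ := norm_nonneg _
  have hnc0 : 0 ≤ ‖z‖ := norm_nonneg _
  have hun : ‖u‖ ≤ cω * ‖z‖ + lα * ‖αi‖ * ‖x‖ + lβ * ‖βi‖ * ‖y‖ := by
    rw [← hu]
    have h0 : ‖cross ω z + lα • cross x αi + lβ • cross y βi‖
        ≤ ‖cross ω z‖ + ‖lα • cross x αi‖ + ‖lβ • cross y βi‖ := norm_add₃_le
    rw [norm_smul, norm_smul, Real.norm_eq_abs, abs_of_pos hlα, Real.norm_eq_abs,
      abs_of_pos hlβ] at h0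
    have hcz : ‖cross ω z‖ ≤ cω * ‖z‖ :=
      (norm_cross_le _ _).trans (mul_le_mul_of_nonneg_right hω hnc0)
    have h1 : lα * ‖cross x αi‖ ≤ lα * (‖x‖ * ‖αi‖) :=
      mul_le_mul_of_nonneg_left (norm_cross_le _ _) hlα.le
    have h2 : lβ * ‖cross y βi‖ ≤ lβ * (‖y‖ * ‖βi‖) :=
      mul_le_mul_of_nonneg_left (norm_cross_le _ _) hlβ.le
    calc ‖cross ω z + lα • cross x αi + lβ • cross y βi‖
        ≤ cω * ‖z‖ + lα * (‖x‖ * ‖αi‖) + lβ * (‖y‖ * ‖βi‖) := by linarith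
    _ = cω * ‖z‖ + lα * ‖αi‖ * ‖x‖ + lβ * ‖βi‖ * ‖y‖ := by ring
  -- expansions
  have hterm1 : ⟪cross z (αi + x) - kα • x, cross z αi⟫
      = ‖cross z αi‖ ^ 2 + ⟪cross z x, cross z αi⟫ - kα * ⟪x, cross z αi⟫ := by
    rw [cross_add_right, inner_sub_left, inner_add_left, real_inner_smul_left, ← norm_sq_eq]
  have hterm2 : ⟪cross z (βi + y) - kβ • y, cross z βi⟫
      = ‖cross z βi‖ ^ 2 + ⟪cross z y, cross z βi⟫ - kβ * ⟪y, cross z βi⟫ := by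
    rw [cross_add_right, inner_sub_left, inner_add_left, real_inner_smul_left, ← norm_sq_eq]
  -- Cauchy–Schwarz bounds
  have hb1 : -(R * ‖αi‖ * (‖x‖ * ‖z‖)) ≤ ⟪cross z x, cross z αi⟫ := by
    apply inner_ge_neg
    have h3 : ‖cross z x‖ * ‖cross z αi‖ ≤ (‖z‖ * ‖x‖) * (‖z‖ * ‖αi‖) :=
      mul_le_mul (norm_cross_le _ _) (norm_cross_le _ _) (norm_nonneg _)
        (mul_nonneg hnc0 hna0)
    have h4 : (‖z‖ * ‖x‖) * (‖z‖ * ‖αi‖) ≤ (R * ‖x‖) * (‖z‖ * ‖αi‖) :=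
      mul_le_mul_of_nonneg_right (mul_le_mul_of_nonneg_right hz hna0)
        (mul_nonneg hnc0 hA0)
    calc ‖cross z x‖ * ‖cross z αi‖ ≤ (R * ‖x‖) * (‖z‖ * ‖αi‖) := le_trans h3 h4
    _ = R * ‖αi‖ * (‖x‖ * ‖z‖) := by ring
  have hb2 : -(R * ‖βi‖ * (‖y‖ * ‖z‖)) ≤ ⟪cross z y, cross z βi⟫ := by
    apply inner_ge_neg
    have h3 : ‖cross z y‖ * ‖cross z βi‖ ≤ (‖z‖ * ‖y‖) * (‖z‖ * ‖βi‖) :=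
      mul_le_mul (norm_cross_le _ _) (norm_cross_le _ _) (norm_nonneg _)
        (mul_nonneg hnc0 hnb0)
    have h4 : (‖z‖ * ‖y‖) * (‖z‖ * ‖βi‖) ≤ (R * ‖y‖) * (‖z‖ * ‖βi‖) :=
      mul_le_mul_of_nonneg_right (mul_le_mul_of_nonneg_right hz hnb0)
        (mul_nonneg hnc0 hB0)
    calc ‖cross z y‖ * ‖cross z βi‖ ≤ (R * ‖y‖) * (‖z‖ * ‖βi‖) := le_trans h3 h4
    _ = R * ‖βi‖ * (‖y‖ * ‖z‖) := by ring
  have hxa : ‖x‖ * ‖cross z αi‖ ≤ ‖αi‖ * (‖x‖ * ‖z‖) := by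
    calc ‖x‖ * ‖cross z αi‖ ≤ ‖x‖ * (‖z‖ * ‖αi‖) :=
          mul_le_mul_of_nonneg_left (norm_cross_le _ _) hna0
    _ = ‖αi‖ * (‖x‖ * ‖z‖) := by ring
  have hyb : ‖y‖ * ‖cross z βi‖ ≤ ‖βi‖ * (‖y‖ * ‖z‖) := by
    calc ‖y‖ * ‖cross z βi‖ ≤ ‖y‖ * (‖z‖ * ‖βi‖) :=
          mul_le_mul_of_nonneg_left (norm_cross_le _ _) hnb0
    _ = ‖βi‖ * (‖y‖ * ‖z‖) := by ring
  have hb3 : ⟪x, cross z αi⟫ ≤ ‖αi‖ * (‖x‖ * ‖z‖) := inner_le_of _ _ _ hxa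
  have hb3' : -(‖αi‖ * (‖x‖ * ‖z‖)) ≤ ⟪x, cross z αi⟫ := inner_ge_neg _ _ _ hxa
  have hb4 : ⟪y, cross z βi⟫ ≤ ‖βi‖ * (‖y‖ * ‖z‖) := inner_le_of _ _ _ hyb
  have hb4' : -(‖βi‖ * (‖y‖ * ‖z‖)) ≤ ⟪y, cross z βi⟫ := inner_ge_neg _ _ _ hyb
  have hb5 : -(‖αi‖ * cω * (‖x‖ * ‖z‖) + lα * ‖αi‖ ^ 2 * ‖x‖ ^ 2
      + ‖αi‖ * lβ * ‖βi‖ * (‖x‖ * ‖y‖)) ≤ ⟪x, cross u αi⟫ := by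
    apply inner_ge_neg
    have h3 : ‖x‖ * ‖cross u αi‖ ≤ ‖x‖ * (‖u‖ * ‖αi‖) :=
      mul_le_mul_of_nonneg_left (norm_cross_le _ _) hna0
    have h4 : ‖x‖ * (‖u‖ * ‖αi‖)
        ≤ ‖x‖ * ((cω * ‖z‖ + lα * ‖αi‖ * ‖x‖ + lβ * ‖βi‖ * ‖y‖) * ‖αi‖) :=
      mul_le_mul_of_nonneg_left (mul_le_mul_of_nonneg_right hun hA0) hna0
    calc ‖x‖ * ‖cross u αi‖
        ≤ ‖x‖ * ((cω * ‖z‖ + lα * ‖αi‖ * ‖x‖ + lβ * ‖βi‖ * ‖y‖) * ‖αi‖) := le_trans h3 h4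
    _ = ‖αi‖ * cω * (‖x‖ * ‖z‖) + lα * ‖αi‖ ^ 2 * ‖x‖ ^ 2
        + ‖αi‖ * lβ * ‖βi‖ * (‖x‖ * ‖y‖) := by ring
  have hb6 : -(‖βi‖ * cω * (‖y‖ * ‖z‖) + ‖βi‖ * lα * ‖αi‖ * (‖x‖ * ‖y‖)
      + lβ * ‖βi‖ ^ 2 * ‖y‖ ^ 2) ≤ ⟪y, cross u βi⟫ := by
    apply inner_ge_neg
    have h3 : ‖y‖ * ‖cross u βi‖ ≤ ‖y‖ * (‖u‖ * ‖βi‖) :=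
      mul_le_mul_of_nonneg_left (norm_cross_le _ _) hnb0
    have h4 : ‖y‖ * (‖u‖ * ‖βi‖)
        ≤ ‖y‖ * ((cω * ‖z‖ + lα * ‖αi‖ * ‖x‖ + lβ * ‖βi‖ * ‖y‖) * ‖βi‖) :=
      mul_le_mul_of_nonneg_left (mul_le_mul_of_nonneg_right hun hB0) hnb0
    calc ‖y‖ * ‖cross u βi‖
        ≤ ‖y‖ * ((cω * ‖z‖ + lα * ‖αi‖ * ‖x‖ + lβ * ‖βi‖ * ‖y‖) * ‖βi‖) := le_trans h3 h4
    _ = ‖βi‖ * cω * (‖y‖ * ‖z‖) + ‖βi‖ * lα * ‖αi‖ * (‖x‖ * ‖y‖)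
        + lβ * ‖βi‖ ^ 2 * ‖y‖ ^ 2 := by ring
  rw [hterm1, hterm2, ge_iff_le]
  exact key_arith ‖αi‖ ‖βi‖ ‖x‖ ‖y‖ ‖z‖ R kα kβ lα lβ cω lam
    (‖cross z αi‖ ^ 2) (‖cross z βi‖ ^ 2)
    ⟪cross z x, cross z αi⟫ ⟪cross z y, cross z βi⟫ ⟪x, cross z αi⟫ ⟪y, cross z βi⟫
    ⟪x, cross u αi⟫ ⟪y, cross u βi⟫
    hA0 hB0 hna0 hnb0 hnc0 hkα hkβ hlα hlβ hcω hR hx hy hz hlam hlamb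
    hb1 hb2 hb3 hb3' hb4 hb4' hb5 hb6


/-- Derivative of the squared norm along a differentiable curve. -/
lemma hasDeriv_normsq (f : ℝ → V3) (f' : V3) (s : Set ℝ) (τ : ℝ)
    (hf : HasDerivWithinAt f f' s τ) :
    HasDerivWithinAt (fun u => ‖f u‖ ^ 2) (2 * ⟪f τ, f'⟫) s τ := by
  have h := hf.inner ℝ hf
  have heq : (fun u => ⟪f u, f u⟫) = fun u => ‖f u‖ ^ 2 :=
    funext fun u => (norm_sq_eq (f u)).symm
  rw [heq] at h
  have hv : ⟪f τ, f'⟫ + ⟪f', f τ⟫ = 2 * ⟪f τ, f'⟫ := by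
    rw [real_inner_comm f' (f τ)]; ring
  rwa [hv] at h

lemma hasDeriv_crossfix (f : ℝ → V3) (f' : V3) (w : V3) (s : Set ℝ) (τ : ℝ)
    (hf : HasDerivWithinAt f f' s τ) :
    HasDerivWithinAt (fun u => cross (f u) w) (cross f' w) s τ := by
  exact (crossL w).hasFDerivAt.comp_hasDerivWithinAt τ hf

/-- Pure real arithmetic for the decay estimate on `W`. -/
lemma wd_arith (kα kβ lα lβ μ lam D g κ0 κ M na2 nb2 nc2 S W Nd : ℝ)
    (hna2 : 0 ≤ na2) (hnb2 : 0 ≤ nb2) (hnc2 : 0 ≤ nc2)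
    (hS : S = na2 + nb2 + nc2)
    (hNd : lam / 2 * nc2 - D * (na2 + nb2) ≤ Nd)
    (hμ0 : 0 < μ) (hμD : μ * D ≤ g)
    (hgα : g ≤ kα * lα) (hgβ : g ≤ kβ * lβ)
    (hκ0g : κ0 ≤ g) (hκ0l : κ0 ≤ μ * lam / 2)
    (hκ : 0 < κ) (hκM : κ * (2 * M) = κ0)
    (hWle : W ≤ 2 * M * S) :
    -(2 * kα * lα) * na2 - (2 * kβ * lβ) * nb2 - μ * Nd ≤ -κ * W := by
  have hNdμ : μ * (lam / 2 * nc2 - D * (na2 + nb2)) ≤ μ * Nd :=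
    mul_le_mul_of_nonneg_left hNd hμ0.le
  have p1 : g * na2 ≤ (2 * (kα * lα) - μ * D) * na2 :=
    mul_le_mul_of_nonneg_right (by linarith) hna2
  have p2 : g * nb2 ≤ (2 * (kβ * lβ) - μ * D) * nb2 :=
    mul_le_mul_of_nonneg_right (by linarith) hnb2
  have p3 : κ0 * nc2 ≤ μ * lam / 2 * nc2 :=
    mul_le_mul_of_nonneg_right hκ0l hnc2
  have p4 : κ0 * na2 ≤ g * na2 := mul_le_mul_of_nonneg_right hκ0g hna2
  have p5 : κ0 * nb2 ≤ g * nb2 := mul_le_mul_of_nonneg_right hκ0g hnb2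
  have p6 : κ * W ≤ κ * (2 * M * S) := mul_le_mul_of_nonneg_left hWle hκ.le
  have p7 : κ * (2 * M * S) = κ0 * S := by rw [← hκM]; ring
  have hSsum : κ0 * S = κ0 * na2 + κ0 * nb2 + κ0 * nc2 := by rw [hS]; ring
  nlinarith [hNdμ, p1, p2, p3, p4, p5, p6, p7, hSsum]

/-- The origin of the error system is uniformly globally attractive. -/
theorem error_system_uniform_global_attractivity
    (αi βi : V3) (hind : LinearIndependent ℝ ![αi, βi])
    (kα kβ lα lβ : ℝ) (hkα : 0 < kα) (hkβ : 0 < kβ) (hlα : 0 < lα) (hlβ : 0 < lβ)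
    (cω : ℝ) (hcω : 0 ≤ cω) :
    ∀ r > (0 : ℝ), ∀ ε > (0 : ℝ), ∃ T > (0 : ℝ),
      ∀ (t₀ : ℝ) (Ω : ℝ → V3), Continuous Ω → (∀ t, ‖Ω t‖ ≤ cω) →
        ∀ Eα Eβ Eb : ℝ → V3, IsSolution αi βi kα kβ lα lβ Ω t₀ Eα Eβ Eb →
          stateNorm (Eα t₀) (Eβ t₀) (Eb t₀) ≤ r →
          ∀ t ≥ t₀ + T, stateNorm (Eα t) (Eβ t) (Eb t) ≤ ε := by
  intro r hr ε hε
  obtain ⟨lam, hlam, hlamb⟩ := exists_lambda αi βi hind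
  have hA0 : (0:ℝ) ≤ ‖αi‖ := norm_nonneg _
  have hB0 : (0:ℝ) ≤ ‖βi‖ := norm_nonneg _
  obtain ⟨m, hmdef⟩ : ∃ m:ℝ, m = min (min lα lβ) 1 := ⟨_, rfl⟩
  have hm0 : 0 < m := by rw [hmdef]; positivity
  have hmlα : m ≤ lα := by rw [hmdef]; exact le_trans (min_le_left _ _) (min_le_left _ _)
  have hmlβ : m ≤ lβ := by rw [hmdef]; exact le_trans (min_le_left _ _) (min_le_right _ _)
  have hm1 : m ≤ 1 := by rw [hmdef]; exact min_le_right _ _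
  obtain ⟨M, hMdef⟩ : ∃ M:ℝ, M = max (max lα lβ) 1 := ⟨_, rfl⟩
  have hMlα : lα ≤ M := by rw [hMdef]; exact le_trans (le_max_left _ _) (le_max_left _ _)
  have hMlβ : lβ ≤ M := by rw [hMdef]; exact le_trans (le_max_right _ _) (le_max_left _ _)
  have hM1 : (1:ℝ) ≤ M := by rw [hMdef]; exact le_max_right _ _
  have hM0 : 0 < M := lt_of_lt_of_le one_pos hM1
  obtain ⟨R, hRdef⟩ : ∃ R:ℝ, R = Real.sqrt (M * r ^ 2 / m) := ⟨_, rfl⟩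
  have hR0 : 0 ≤ R := by rw [hRdef]; exact Real.sqrt_nonneg _
  obtain ⟨D, hDdef⟩ : ∃ D:ℝ,
      D = ((‖αi‖ + ‖βi‖) * (R + kα + kβ + cω)) ^ 2 / lam
          + (‖αi‖ + ‖βi‖) * (lα * ‖αi‖ + lβ * ‖βi‖) := ⟨_, rfl⟩
  have hD0 : 0 ≤ D := by rw [hDdef]; positivity
  obtain ⟨cN, hcNdef⟩ : ∃ c:ℝ, c = ‖αi‖ + ‖βi‖ := ⟨_, rfl⟩
  have hcN0 : 0 ≤ cN := by rw [hcNdef]; positivity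
  obtain ⟨g, hgdef⟩ : ∃ g:ℝ, g = min (kα * lα) (kβ * lβ) := ⟨_, rfl⟩
  have hg0 : 0 < g := by rw [hgdef]; positivity
  have hgα : g ≤ kα * lα := by rw [hgdef]; exact min_le_left _ _
  have hgβ : g ≤ kβ * lβ := by rw [hgdef]; exact min_le_right _ _
  obtain ⟨μ, hμdef⟩ : ∃ μ:ℝ, μ = min (m / (2 * (cN + 1))) (g / (D + 1)) := ⟨_, rfl⟩
  have hμ0 : 0 < μ := by
    rw [hμdef]; apply lt_min <;> positivity
  have hμcN : μ * cN ≤ m / 2 := by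
    have h1 : μ ≤ m / (2 * (cN + 1)) := by rw [hμdef]; exact min_le_left _ _
    have h3 : μ * (cN + 1) ≤ (m / (2 * (cN + 1))) * (cN + 1) :=
      mul_le_mul_of_nonneg_right h1 (by linarith)
    have h4 : (m / (2 * (cN + 1))) * (cN + 1) = m / 2 := by field_simp
    linarith only [h3, h4, hμ0]
  have hμD : μ * D ≤ g := by
    have h1 : μ ≤ g / (D + 1) := by rw [hμdef]; exact min_le_right _ _
    have h3 : μ * (D + 1) ≤ (g / (D + 1)) * (D + 1) :=
      mul_le_mul_of_nonneg_right h1 (by linarith)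
    have h4 : (g / (D + 1)) * (D + 1) = g := by field_simp
    linarith only [h3, h4, hμ0]
  obtain ⟨κ0, hκ0def⟩ : ∃ k:ℝ, k = min g (μ * lam / 2) := ⟨_, rfl⟩
  have hκ00 : 0 < κ0 := by rw [hκ0def]; positivity
  have hκ0g : κ0 ≤ g := by rw [hκ0def]; exact min_le_left _ _
  have hκ0l : κ0 ≤ μ * lam / 2 := by rw [hκ0def]; exact min_le_right _ _
  obtain ⟨κ, hκdef⟩ : ∃ k:ℝ, k = κ0 / (2 * M) := ⟨_, rfl⟩
  have hκpos : 0 < κ := by rw [hκdef]; positivity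
  have hκM : κ * (2 * M) = κ0 := by
    rw [hκdef]
    exact div_mul_cancel₀ κ0 (by positivity : (0:ℝ) < 2 * M).ne'
  obtain ⟨C, hCdef⟩ : ∃ C:ℝ, C = 4 * M * r ^ 2 / m := ⟨_, rfl⟩
  have hC0 : 0 < C := by rw [hCdef]; positivity
  have hmC : m * C = 4 * M * r ^ 2 := by rw [hCdef]; field_simp
  obtain ⟨T, hTdef⟩ : ∃ T:ℝ, T = max 1 ((1 / κ) * Real.log (C / ε ^ 2)) := ⟨_, rfl⟩
  have hT1 : (1:ℝ) ≤ T := by rw [hTdef]; exact le_max_left _ _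
  have hTlog : (1 / κ) * Real.log (C / ε ^ 2) ≤ T := by rw [hTdef]; exact le_max_right _ _
  have hT0 : 0 < T := lt_of_lt_of_le one_pos hT1
  -- decay of the exponential bound below ε²
  have hCball : C * Real.exp (-κ * T) ≤ ε ^ 2 := by
    have hlog : Real.log (C / ε ^ 2) ≤ κ * T := by
      have h := mul_le_mul_of_nonneg_left hTlog hκpos.le
      calc Real.log (C / ε ^ 2) = κ * ((1 / κ) * Real.log (C / ε ^ 2)) := by
            field_simp
      _ ≤ κ * T := h
    have hv0 : (0:ℝ) < C / ε ^ 2 := by positivity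
    have hexp : Real.exp (-κ * T) ≤ ε ^ 2 / C := by
      have h1 : Real.exp (-κ * T) ≤ Real.exp (-(Real.log (C / ε ^ 2))) := by
        apply Real.exp_le_exp.mpr; linarith
      rwa [Real.exp_neg, Real.exp_log hv0, inv_div] at h1
    calc C * Real.exp (-κ * T) ≤ C * (ε ^ 2 / C) :=
          mul_le_mul_of_nonneg_left hexp hC0.le
    _ = ε ^ 2 := by field_simp
  refine ⟨T, hT0, ?_⟩
  intro t₀ Ω hΩc hΩb Eα Eβ Eb hsol hinit t htge
  have ht0 : t₀ ≤ t := by linarith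
  -- the Lyapunov functions
  obtain ⟨V, hVdef⟩ : ∃ V : ℝ → ℝ,
      V = fun u => lα * ‖Eα u‖ ^ 2 + lβ * ‖Eβ u‖ ^ 2 + ‖Eb u‖ ^ 2 := ⟨_, rfl⟩
  obtain ⟨N, hNdef⟩ : ∃ N : ℝ → ℝ,
      N = fun u => ⟪Eα u, cross (Eb u) αi⟫ + ⟪Eβ u, cross (Eb u) βi⟫ := ⟨_, rfl⟩
  obtain ⟨W, hWdef⟩ : ∃ w : ℝ → ℝ, w = fun u => V u - μ * N u := ⟨_, rfl⟩
  obtain ⟨S, hSdef⟩ : ∃ S : ℝ → ℝ,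
      S = fun u => ‖Eα u‖ ^ 2 + ‖Eβ u‖ ^ 2 + ‖Eb u‖ ^ 2 := ⟨_, rfl⟩
  have hSnn : ∀ τ, 0 ≤ S τ := by intro τ; rw [hSdef]; positivity
  -- derivative of V
  have hVD : ∀ τ ∈ Set.Ici t₀, HasDerivWithinAt V
      (-(2 * kα * lα) * ‖Eα τ‖ ^ 2 - (2 * kβ * lβ) * ‖Eβ τ‖ ^ 2) (Set.Ici t₀) τ := by
    intro τ hτ
    obtain ⟨h1, h2, h3⟩ := hsol τ hτ
    have d1 := (hasDeriv_normsq _ _ _ _ h1).const_mul lα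
    have d2 := (hasDeriv_normsq _ _ _ _ h2).const_mul lβ
    have d3 := hasDeriv_normsq _ _ _ _ h3
    have hsum := (d1.add d2).add d3
    have e1 : ⟪Eα τ, cross (Eb τ) (αi + Eα τ) - kα • Eα τ⟫
        = ⟪Eα τ, cross (Eb τ) αi⟫ - kα * ‖Eα τ‖ ^ 2 := by
      rw [inner_sub_right, cross_add_right, inner_add_right, inner_cross_self,
        real_inner_smul_right, ← norm_sq_eq]
      ring
    have e2 : ⟪Eβ τ, cross (Eb τ) (βi + Eβ τ) - kβ • Eβ τ⟫
        = ⟪Eβ τ, cross (Eb τ) βi⟫ - kβ * ‖Eβ τ‖ ^ 2 := by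
      rw [inner_sub_right, cross_add_right, inner_add_right, inner_cross_self,
        real_inner_smul_right, ← norm_sq_eq]
      ring
    have e3 : ⟪Eb τ, cross (Ω τ) (Eb τ) + lα • cross (Eα τ) αi + lβ • cross (Eβ τ) βi⟫
        = lα * ⟪Eb τ, cross (Eα τ) αi⟫ + lβ * ⟪Eb τ, cross (Eβ τ) βi⟫ := by
      rw [inner_add_right, inner_add_right, inner_cross_self,
        real_inner_smul_right, real_inner_smul_right]
      ring
    have s1 := inner_cross_swap (Eα τ) (Eb τ) αi
    have s2 := inner_cross_swap (Eβ τ) (Eb τ) βi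
    have hval : lα * (2 * ⟪Eα τ, cross (Eb τ) (αi + Eα τ) - kα • Eα τ⟫)
        + lβ * (2 * ⟪Eβ τ, cross (Eb τ) (βi + Eβ τ) - kβ • Eβ τ⟫)
        + 2 * ⟪Eb τ, cross (Ω τ) (Eb τ) + lα • cross (Eα τ) αi + lβ • cross (Eβ τ) βi⟫
        = -(2 * kα * lα) * ‖Eα τ‖ ^ 2 - (2 * kβ * lβ) * ‖Eβ τ‖ ^ 2 := by
      rw [e1, e2, e3]
      linear_combination (2 * lα) * s1 + (2 * lβ) * s2
    rw [hVdef]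
    rw [hval] at hsum
    exact hsum
  -- derivative of N
  have hND : ∀ τ ∈ Set.Ici t₀, HasDerivWithinAt N
      (⟪Eα τ, cross (cross (Ω τ) (Eb τ) + lα • cross (Eα τ) αi + lβ • cross (Eβ τ) βi) αi⟫
        + ⟪cross (Eb τ) (αi + Eα τ) - kα • Eα τ, cross (Eb τ) αi⟫
        + (⟪Eβ τ, cross (cross (Ω τ) (Eb τ) + lα • cross (Eα τ) αi + lβ • cross (Eβ τ) βi) βi⟫
        + ⟪cross (Eb τ) (βi + Eβ τ) - kβ • Eβ τ, cross (Eb τ) βi⟫)) (Set.Ici t₀) τ := by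
    intro τ hτ
    obtain ⟨h1, h2, h3⟩ := hsol τ hτ
    rw [hNdef]
    exact (h1.inner ℝ (hasDeriv_crossfix _ _ αi _ _ h3)).add
      (h2.inner ℝ (hasDeriv_crossfix _ _ βi _ _ h3))
  -- derivative of W
  have hWD : ∀ τ ∈ Set.Ici t₀, HasDerivWithinAt W
      ((-(2 * kα * lα) * ‖Eα τ‖ ^ 2 - (2 * kβ * lβ) * ‖Eβ τ‖ ^ 2)
        - μ * (⟪Eα τ, cross (cross (Ω τ) (Eb τ) + lα • cross (Eα τ) αi + lβ • cross (Eβ τ) βi) αi⟫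
        + ⟪cross (Eb τ) (αi + Eα τ) - kα • Eα τ, cross (Eb τ) αi⟫
        + (⟪Eβ τ, cross (cross (Ω τ) (Eb τ) + lα • cross (Eα τ) αi + lβ • cross (Eβ τ) βi) βi⟫
        + ⟪cross (Eb τ) (βi + Eβ τ) - kβ • Eβ τ, cross (Eb τ) βi⟫))) (Set.Ici t₀) τ := by
    intro τ hτ
    rw [hWdef]
    exact (hVD τ hτ).sub ((hND τ hτ).const_mul μ)
  -- V is nonincreasing
  have hVcont : ContinuousOn V (Set.Ici t₀) :=
    fun τ hτ => (hVD τ hτ).continuousWithinAt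
  have hVmono : AntitoneOn V (Set.Ici t₀) := by
    apply antitoneOn_of_deriv_nonpos (convex_Ici t₀) hVcont
    · intro τ hτ
      rw [interior_Ici] at hτ
      exact ((hVD τ (Set.Ioi_subset_Ici_self hτ)).hasDerivAt
        (Ici_mem_nhds hτ)).differentiableAt.differentiableWithinAt
    · intro τ hτ
      rw [interior_Ici] at hτ
      rw [((hVD τ (Set.Ioi_subset_Ici_self hτ)).hasDerivAt (Ici_mem_nhds hτ)).deriv]
      have q1 : 0 ≤ 2 * kα * lα * ‖Eα τ‖ ^ 2 := by positivity
      have q2 : 0 ≤ 2 * kβ * lβ * ‖Eβ τ‖ ^ 2 := by positivity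
      linarith only [q1, q2]
  -- initial bound
  have hS0 : S t₀ ≤ r ^ 2 := by
    have h1 : Real.sqrt (S t₀) ≤ r := by
      rw [hSdef]; exact hinit
    have h2 : S t₀ = Real.sqrt (S t₀) ^ 2 := (Real.sq_sqrt (hSnn t₀)).symm
    rw [h2]
    exact pow_le_pow_left₀ (Real.sqrt_nonneg _) h1 2
  have hVS : ∀ τ, m * S τ ≤ V τ ∧ V τ ≤ M * S τ := by
    intro τ
    rw [hVdef, hSdef]
    simp only []
    have q1 : m * ‖Eα τ‖ ^ 2 ≤ lα * ‖Eα τ‖ ^ 2 := mul_le_mul_of_nonneg_right hmlα (sq_nonneg _)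
    have q2 : m * ‖Eβ τ‖ ^ 2 ≤ lβ * ‖Eβ τ‖ ^ 2 := mul_le_mul_of_nonneg_right hmlβ (sq_nonneg _)
    have q3 : m * ‖Eb τ‖ ^ 2 ≤ 1 * ‖Eb τ‖ ^ 2 := mul_le_mul_of_nonneg_right hm1 (sq_nonneg _)
    have q4 : lα * ‖Eα τ‖ ^ 2 ≤ M * ‖Eα τ‖ ^ 2 := mul_le_mul_of_nonneg_right hMlα (sq_nonneg _)
    have q5 : lβ * ‖Eβ τ‖ ^ 2 ≤ M * ‖Eβ τ‖ ^ 2 := mul_le_mul_of_nonneg_right hMlβ (sq_nonneg _)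
    have q6 : 1 * ‖Eb τ‖ ^ 2 ≤ M * ‖Eb τ‖ ^ 2 := mul_le_mul_of_nonneg_right hM1 (sq_nonneg _)
    constructor
    · linarith only [q1, q2, q3]
    · linarith only [q4, q5, q6]
  have hVt0 : V t₀ ≤ M * r ^ 2 := by
    have h1 := (hVS t₀).2
    have h2 : M * S t₀ ≤ M * r ^ 2 := mul_le_mul_of_nonneg_left hS0 hM0.le
    linarith
  -- uniform bound on norms
  have hnormb : ∀ τ ∈ Set.Ici t₀, ‖Eα τ‖ ≤ R ∧ ‖Eβ τ‖ ≤ R ∧ ‖Eb τ‖ ≤ R := by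
    intro τ hτ
    have hVτ : V τ ≤ M * r ^ 2 := le_trans (hVmono Set.self_mem_Ici hτ hτ) hVt0
    have hmS : m * S τ ≤ M * r ^ 2 := le_trans (hVS τ).1 hVτ
    have hSb : S τ ≤ M * r ^ 2 / m := (le_div_iff₀' hm0).mpr hmS
    have key : ∀ w : V3, ‖w‖ ^ 2 ≤ S τ → ‖w‖ ≤ R := by
      intro w hw
      have h1 : ‖w‖ ^ 2 ≤ M * r ^ 2 / m := le_trans hw hSb
      have h2 := Real.sqrt_le_sqrt h1
      rwa [Real.sqrt_sq (norm_nonneg w), ← hRdef] at h2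
    refine ⟨key _ ?_, key _ ?_, key _ ?_⟩ <;>
      · rw [hSdef]
        simp only []
        linarith only [sq_nonneg ‖Eα τ‖, sq_nonneg ‖Eβ τ‖, sq_nonneg ‖Eb τ‖]
  -- |N| ≤ cN * S
  have hNabs : ∀ τ, N τ ≤ cN * S τ ∧ -(cN * S τ) ≤ N τ := by
    intro τ
    have c1 : ‖Eα τ‖ * ‖cross (Eb τ) αi‖ ≤ ‖αi‖ * S τ := by
      have h1 : ‖Eα τ‖ * ‖cross (Eb τ) αi‖ ≤ ‖Eα τ‖ * (‖Eb τ‖ * ‖αi‖) :=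
        mul_le_mul_of_nonneg_left (norm_cross_le _ _) (norm_nonneg _)
      have h2 : ‖Eα τ‖ * ‖Eb τ‖ ≤ S τ := by
        rw [hSdef]
        simp only []
        linarith only [sq_nonneg (‖Eα τ‖ - ‖Eb τ‖), sq_nonneg ‖Eβ τ‖, sq_nonneg ‖Eα τ‖, sq_nonneg ‖Eb τ‖]
      calc ‖Eα τ‖ * ‖cross (Eb τ) αi‖ ≤ ‖Eα τ‖ * (‖Eb τ‖ * ‖αi‖) := h1
      _ = ‖αi‖ * (‖Eα τ‖ * ‖Eb τ‖) := by ring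
      _ ≤ ‖αi‖ * S τ := mul_le_mul_of_nonneg_left h2 hA0
    have c2 : ‖Eβ τ‖ * ‖cross (Eb τ) βi‖ ≤ ‖βi‖ * S τ := by
      have h1 : ‖Eβ τ‖ * ‖cross (Eb τ) βi‖ ≤ ‖Eβ τ‖ * (‖Eb τ‖ * ‖βi‖) :=
        mul_le_mul_of_nonneg_left (norm_cross_le _ _) (norm_nonneg _)
      have h2 : ‖Eβ τ‖ * ‖Eb τ‖ ≤ S τ := by
        rw [hSdef]
        simp only []
        linarith only [sq_nonneg (‖Eβ τ‖ - ‖Eb τ‖), sq_nonneg ‖Eα τ‖, sq_nonneg ‖Eβ τ‖, sq_nonneg ‖Eb τ‖]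
      calc ‖Eβ τ‖ * ‖cross (Eb τ) βi‖ ≤ ‖Eβ τ‖ * (‖Eb τ‖ * ‖βi‖) := h1
      _ = ‖βi‖ * (‖Eβ τ‖ * ‖Eb τ‖) := by ring
      _ ≤ ‖βi‖ * S τ := mul_le_mul_of_nonneg_left h2 hB0
    have i1 := inner_le_of (Eα τ) (cross (Eb τ) αi) _ c1
    have i1' := inner_ge_neg (Eα τ) (cross (Eb τ) αi) _ c1
    have i2 := inner_le_of (Eβ τ) (cross (Eb τ) βi) _ c2
    have i2' := inner_ge_neg (Eβ τ) (cross (Eb τ) βi) _ c2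
    have hcNS : cN * S τ = ‖αi‖ * S τ + ‖βi‖ * S τ := by rw [hcNdef]; ring
    rw [hNdef]
    constructor <;> simp only [] <;> linarith only [i1, i2, i1', i2', hcNS, hSnn τ]
  -- W is comparable to S
  have hWS : ∀ τ, m / 2 * S τ ≤ W τ ∧ W τ ≤ 2 * M * S τ := by
    intro τ
    have h1 := (hVS τ).1
    have h2 := (hVS τ).2
    have h3 := (hNabs τ).1
    have h4 := (hNabs τ).2
    have h5 : μ * N τ ≤ μ * (cN * S τ) := mul_le_mul_of_nonneg_left h3 hμ0.le
    have h6 : μ * (-(cN * S τ)) ≤ μ * N τ := mul_le_mul_of_nonneg_left h4 hμ0.le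
    have h7 : μ * (cN * S τ) = (μ * cN) * S τ := by ring
    have h8 : (μ * cN) * S τ ≤ m / 2 * S τ := mul_le_mul_of_nonneg_right hμcN (hSnn τ)
    have h9 : m / 2 * S τ ≤ M * S τ := by
      apply mul_le_mul_of_nonneg_right _ (hSnn τ)
      linarith
    rw [hWdef]
    constructor <;> simp only [] <;> linarith only [h1, h2, h5, h6, h8, h9, hSnn τ]
  -- decay estimate for the derivative of W
  have hWd : ∀ τ ∈ Set.Ici t₀,
      ((-(2 * kα * lα) * ‖Eα τ‖ ^ 2 - (2 * kβ * lβ) * ‖Eβ τ‖ ^ 2)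
        - μ * (⟪Eα τ, cross (cross (Ω τ) (Eb τ) + lα • cross (Eα τ) αi + lβ • cross (Eβ τ) βi) αi⟫
        + ⟪cross (Eb τ) (αi + Eα τ) - kα • Eα τ, cross (Eb τ) αi⟫
        + (⟪Eβ τ, cross (cross (Ω τ) (Eb τ) + lα • cross (Eα τ) αi + lβ • cross (Eβ τ) βi) βi⟫
        + ⟪cross (Eb τ) (βi + Eβ τ) - kβ • Eβ τ, cross (Eb τ) βi⟫)))
      ≤ -κ * W τ := by
    intro τ hτ
    obtain ⟨hxa, hya, hza⟩ := hnormb τ hτ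
    have hkb := key_bound αi βi (Eα τ) (Eβ τ) (Eb τ) (Ω τ) lam kα kβ lα lβ cω R
      hlam (hlamb (Eb τ)) hkα hkβ hlα hlβ hcω hR0 hxa hya hza (hΩb τ)
    rw [ge_iff_le, ← hDdef] at hkb
    have hNd' : lam / 2 * ‖Eb τ‖ ^ 2 - D * (‖Eα τ‖ ^ 2 + ‖Eβ τ‖ ^ 2)
        ≤ ⟪Eα τ, cross (cross (Ω τ) (Eb τ) + lα • cross (Eα τ) αi + lβ • cross (Eβ τ) βi) αi⟫
        + ⟪cross (Eb τ) (αi + Eα τ) - kα • Eα τ, cross (Eb τ) αi⟫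
        + (⟪Eβ τ, cross (cross (Ω τ) (Eb τ) + lα • cross (Eα τ) αi + lβ • cross (Eβ τ) βi) βi⟫
        + ⟪cross (Eb τ) (βi + Eβ τ) - kβ • Eβ τ, cross (Eb τ) βi⟫) := by
      linarith only [hkb]
    have hSτ : S τ = ‖Eα τ‖ ^ 2 + ‖Eβ τ‖ ^ 2 + ‖Eb τ‖ ^ 2 := by rw [hSdef]
    exact wd_arith kα kβ lα lβ μ lam D g κ0 κ M (‖Eα τ‖ ^ 2) (‖Eβ τ‖ ^ 2) (‖Eb τ‖ ^ 2)
      (S τ) (W τ) _ (sq_nonneg _) (sq_nonneg _) (sq_nonneg _) hSτ hNd' hμ0 hμD hgα hgβ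
      hκ0g hκ0l hκpos hκM (hWS τ).2
  -- Grönwall on [t₀, t]
  have hWcont : ContinuousOn W (Set.Icc t₀ t) :=
    fun τ hτ => ((hWD τ hτ.1).continuousWithinAt).mono Set.Icc_subset_Ici_self
  have hgron := le_gronwallBound_of_liminf_deriv_right_le (f := W)
    (f' := fun τ =>
      ((-(2 * kα * lα) * ‖Eα τ‖ ^ 2 - (2 * kβ * lβ) * ‖Eβ τ‖ ^ 2)
        - μ * (⟪Eα τ, cross (cross (Ω τ) (Eb τ) + lα • cross (Eα τ) αi + lβ • cross (Eβ τ) βi) αi⟫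
        + ⟪cross (Eb τ) (αi + Eα τ) - kα • Eα τ, cross (Eb τ) αi⟫
        + (⟪Eβ τ, cross (cross (Ω τ) (Eb τ) + lα • cross (Eα τ) αi + lβ • cross (Eβ τ) βi) βi⟫
        + ⟪cross (Eb τ) (βi + Eβ τ) - kβ • Eβ τ, cross (Eb τ) βi⟫))))
    (δ := W t₀) (K := -κ) (ε := 0) (a := t₀) (b := t)
    hWcont
    (fun x hx rr hrr => ((hWD x hx.1).mono (Set.Ici_subset_Ici.mpr hx.1)).liminf_right_slope_le hrr)
    (le_refl _)
    (fun x hx => by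
      have h := hWd x hx.1
      rw [add_zero]
      exact h)
  have hWt := hgron t ⟨ht0, le_refl t⟩
  rw [gronwallBound_ε0] at hWt
  -- final numeric estimate
  have hWt0 : W t₀ ≤ 2 * M * r ^ 2 := by
    have h1 := (hWS t₀).2
    have h2 : 2 * M * S t₀ ≤ 2 * M * r ^ 2 := by
      apply mul_le_mul_of_nonneg_left hS0
      positivity
    linarith
  have hE0 : (0:ℝ) < Real.exp (-κ * (t - t₀)) := Real.exp_pos _
  have hEmono : Real.exp (-κ * (t - t₀)) ≤ Real.exp (-κ * T) := by
    apply Real.exp_le_exp.mpr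
    have hTt : T ≤ t - t₀ := by linarith only [htge]
    have := mul_le_mul_of_nonneg_left hTt hκpos.le
    linarith only [this]
  have hchain : W t ≤ 2 * M * r ^ 2 * Real.exp (-κ * T) := by
    calc W t ≤ W t₀ * Real.exp (-κ * (t - t₀)) := hWt
    _ ≤ 2 * M * r ^ 2 * Real.exp (-κ * (t - t₀)) :=
        mul_le_mul_of_nonneg_right hWt0 hE0.le
    _ ≤ 2 * M * r ^ 2 * Real.exp (-κ * T) := by
        apply mul_le_mul_of_nonneg_left hEmono
        positivity
  have hSt : S t ≤ ε ^ 2 := by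
    have h1 := (hWS t).1
    -- m * S t ≤ 2 * (2 M r² exp) = m * C * exp
    have h2 : m * S t ≤ m * (C * Real.exp (-κ * T)) := by
      have heq : m * (C * Real.exp (-κ * T)) = 4 * M * r ^ 2 * Real.exp (-κ * T) := by
        rw [← hmC]; ring
      linarith only [heq, hchain, h1]
    have h3 : m * (C * Real.exp (-κ * T)) ≤ m * ε ^ 2 :=
      mul_le_mul_of_nonneg_left hCball hm0.le
    exact le_of_mul_le_mul_left (le_trans h2 h3) hm0
  -- conclude
  have hfin : Real.sqrt (S t) ≤ ε := by
    calc Real.sqrt (S t) ≤ Real.sqrt (ε ^ 2) := Real.sqrt_le_sqrt hSt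
    _ = ε := Real.sqrt_sq hε.le
  have hSt' : S t = ‖Eα t‖ ^ 2 + ‖Eβ t‖ ^ 2 + ‖Eb t‖ ^ 2 := by rw [hSdef]
  show Real.sqrt (‖Eα t‖ ^ 2 + ‖Eβ t‖ ^ 2 + ‖Eb t‖ ^ 2) ≤ ε
  rw [← hSt']
  exact hfin
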